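/- Let ⟨·,·⟩ be a nondegenerate antisymmetric bilinear form on ℤ^{2g} (g ≥ 1). Then the only Lie ideals of ℚ[ℤ^{2g}] (with bracket [w,v] = ⟨w,v⟩·(w+v)) are: the zero ideal, the span of the basis element 0 ∈ ℤ^{2g}, the span of all basis elements w ≠ 0, and the whole algebra ℚ[ℤ^{2g}]. -/

import Mathlib

/-- The bracket on the free `ℚ`-module on `ℤⁿ` defined on basis elements by
`[w, v] = ⟨w, v⟩ • (w + v)` and extended `ℚ`-bilinearly. -/
noncomputable def brQ {n : ℕ} (B : (Fin n → ℤ) → (Fin n → ℤ) → ℤ)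
    (x y : (Fin n → ℤ) →₀ ℚ) : (Fin n → ℤ) →₀ ℚ :=
  x.sum fun w a => y.sum fun v b => Finsupp.single (w + v) (a * b * (B w v : ℚ))

section Aux

variable {n : ℕ} (B : (Fin n → ℤ) →ₗ[ℤ] (Fin n → ℤ) →ₗ[ℤ] ℤ)

lemma brQ_single_single (w v : Fin n → ℤ) (a b : ℚ) :
    brQ (fun a b => B a b) (Finsupp.single w a) (Finsupp.single v b)
      = Finsupp.single (w + v) (a * b * ((B w) v : ℚ)) := by
  unfold brQ
  rw [Finsupp.sum_single_index (by simp [Finsupp.sum]),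
    Finsupp.sum_single_index (by simp)]

lemma brQ_single (x : (Fin n → ℤ) →₀ ℚ) (v : Fin n → ℤ) :
    brQ (fun a b => B a b) x (Finsupp.single v 1)
      = x.sum fun w a => Finsupp.single (w + v) (a * ((B w) v : ℚ)) := by
  unfold brQ
  refine Finsupp.sum_congr fun w hw => ?_
  rw [Finsupp.sum_single_index (by simp), mul_one]

lemma brQ_apply (x : (Fin n → ℤ) →₀ ℚ) (v u : Fin n → ℤ) :
    brQ (fun a b => B a b) x (Finsupp.single v 1) u
      = x (u - v) * ((B (u - v)) v : ℚ) := by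
  classical
  rw [brQ_single, Finsupp.sum_apply]
  unfold Finsupp.sum
  rw [Finset.sum_eq_single (u - v)]
  · simp [Finsupp.single_apply]
  · intro w hw hne
    have h : w + v ≠ u := fun h => hne (eq_sub_of_add_eq h)
    simp [Finsupp.single_apply, h]
  · intro h
    have : x (u - v) = 0 := Finsupp.notMem_support_iff.mp h
    simp [this]

lemma Bww (hB : ∀ x y, B x y = - B y x) (w : Fin n → ℤ) : B w w = 0 := by
  have := hB w w; omega

lemma step {I : Submodule ℚ ((Fin n → ℤ) →₀ ℚ)}
    (hI : ∀ x ∈ I, ∀ y, brQ (fun a b => B a b) x y ∈ I)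
    (hB : ∀ x y, B x y = - B y x)
    {w t : Fin n → ℤ} (hw : Finsupp.single w (1:ℚ) ∈ I) (h : B w t ≠ 0) :
    Finsupp.single t (1:ℚ) ∈ I := by
  have h1 := hI _ hw (Finsupp.single (t - w) 1)
  rw [brQ_single_single] at h1
  have he : w + (t - w) = t := by abel
  have hv : (B w) (t - w) = B w t := by
    rw [map_sub, Bww B hB]; ring
  rw [he, hv] at h1
  have h2 : Finsupp.single t (1:ℚ)
      = ((B w t : ℚ))⁻¹ • Finsupp.single t ((1:ℚ) * 1 * (B w t : ℚ)) := by
    rw [Finsupp.smul_single]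
    congr 1
    have : ((B w t : ℚ)) ≠ 0 := Int.cast_ne_zero.mpr h
    rw [smul_eq_mul]
    field_simp
  rw [h2]
  exact I.smul_mem _ h1

lemma propagate {I : Submodule ℚ ((Fin n → ℤ) →₀ ℚ)}
    (hI : ∀ x ∈ I, ∀ y, brQ (fun a b => B a b) x y ∈ I)
    (hB : ∀ x y, B x y = - B y x)
    (hnd : ∀ x : Fin n → ℤ, x ≠ 0 → ∃ y, B x y ≠ 0)
    {u : Fin n → ℤ} (hu : u ≠ 0) (hmem : Finsupp.single u (1:ℚ) ∈ I)
    {v : Fin n → ℤ} (hv : v ≠ 0) : Finsupp.single v (1:ℚ) ∈ I := by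
  obtain ⟨y, hy⟩ := hnd u hu
  obtain ⟨y', hy'⟩ := hnd v hv
  obtain ⟨t, ht1, ht2⟩ : ∃ t, B u t ≠ 0 ∧ B v t ≠ 0 := by
    by_cases h1 : B v y ≠ 0
    · exact ⟨y, hy, h1⟩
    by_cases h2 : B u y' ≠ 0
    · exact ⟨y', h2, hy'⟩
    push_neg at h1 h2
    refine ⟨y + y', ?_, ?_⟩
    · rw [map_add, h2, add_zero]; exact hy
    · rw [map_add, h1, zero_add]; exact hy'
  have h3 := step B hI hB hmem ht1
  exact step B hI hB h3 (by have := hB t v; omega)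

lemma dichotomy (hnd : ∀ x : Fin n → ℤ, x ≠ 0 → ∃ y, B x y ≠ 0)
    {w0 : Fin n → ℤ} (hw0 : w0 ≠ 0) (w1 : Fin n → ℤ) :
    (∃ v, B w1 v = 0 ∧ B w0 v ≠ 0) ∨ ∃ p q : ℤ, p ≠ 0 ∧ q ≠ 0 ∧ p • w1 = q • w0 := by
  by_cases hsep : ∃ v, B w1 v = 0 ∧ B w0 v ≠ 0
  · exact Or.inl hsep
  right
  push_neg at hsep
  obtain ⟨y0, hy0⟩ := hnd w0 hw0
  by_cases hq : B w1 y0 = 0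
  · exact absurd (hsep y0 hq) (by simpa using hy0)
  have key : ∀ v, B w1 y0 * B w0 v = B w0 y0 * B w1 v := by
    intro v
    have hz : (B w1) ((B w1 y0) • v - (B w1 v) • y0) = 0 := by
      rw [map_sub, map_smul, map_smul, smul_eq_mul, smul_eq_mul]; ring
    have h2 := hsep _ hz
    rw [map_sub, map_smul, map_smul, smul_eq_mul, smul_eq_mul, sub_eq_zero] at h2
    linarith
  have hzero : (B w1 y0) • w0 - (B w0 y0) • w1 = 0 := by
    by_contra h
    obtain ⟨y, hy⟩ := hnd _ h
    apply hy
    rw [map_sub, map_smul, map_smul, LinearMap.sub_apply, LinearMap.smul_apply,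
      LinearMap.smul_apply, smul_eq_mul, smul_eq_mul]
    have := key y
    linarith
  rw [sub_eq_zero] at hzero
  exact ⟨B w0 y0, B w1 y0, hy0, hq, hzero.symm⟩

lemma mem_supp_brQ {x : (Fin n → ℤ) →₀ ℚ} {v u : Fin n → ℤ}
    (hu : u ∈ (brQ (fun a b => B a b) x (Finsupp.single v 1)).support) :
    (u - v) ∈ x.support ∧ (B (u - v)) v ≠ 0 := by
  rw [Finsupp.mem_support_iff, brQ_apply] at hu
  constructor
  · rw [Finsupp.mem_support_iff]
    intro h; exact hu (by rw [h, zero_mul])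
  · intro h; exact hu (by rw [h, Int.cast_zero, mul_zero])

lemma brQ_supp_card (x : (Fin n → ℤ) →₀ ℚ) (v : Fin n → ℤ) :
    (brQ (fun a b => B a b) x (Finsupp.single v 1)).support.card ≤ x.support.card := by
  classical
  have hsub : (brQ (fun a b => B a b) x (Finsupp.single v 1)).support
      ⊆ x.support.image (· + v) := by
    intro u hu
    obtain ⟨h1, _⟩ := mem_supp_brQ B hu
    exact Finset.mem_image.mpr ⟨u - v, h1, by abel⟩
  exact le_trans (Finset.card_le_card hsub) (Finset.card_image_le)

lemma shrink_card {x : (Fin n → ℤ) →₀ ℚ} {v w1 : Fin n → ℤ}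
    (hw1 : w1 ∈ x.support) (hkill : B w1 v = 0) :
    (brQ (fun a b => B a b) x (Finsupp.single v 1)).support.card ≤ x.support.card - 1 := by
  classical
  have hsub : (brQ (fun a b => B a b) x (Finsupp.single v 1)).support
      ⊆ (x.support.erase w1).image (· + v) := by
    intro u hu
    obtain ⟨h1, h2⟩ := mem_supp_brQ B hu
    refine Finset.mem_image.mpr ⟨u - v, Finset.mem_erase.mpr ⟨?_, h1⟩, by abel⟩
    intro h; rw [h] at h2; exact h2 hkill
  calc (brQ (fun a b => B a b) x (Finsupp.single v 1)).support.card
      ≤ ((x.support.erase w1).image (· + v)).card := Finset.card_le_card hsub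
    _ ≤ (x.support.erase w1).card := Finset.card_image_le
    _ = x.support.card - 1 := Finset.card_erase_of_mem hw1

lemma main_lemma
    {I : Submodule ℚ ((Fin n → ℤ) →₀ ℚ)}
    (hI : ∀ x ∈ I, ∀ y, brQ (fun a b => B a b) x y ∈ I)
    (hB : ∀ x y, B x y = - B y x)
    (hnd : ∀ x : Fin n → ℤ, x ≠ 0 → ∃ y, B x y ≠ 0) :
    ∀ (N : ℕ) (x : (Fin n → ℤ) →₀ ℚ), x ∈ I → x.support.card ≤ N →
      ∀ w0 : Fin n → ℤ, w0 ≠ 0 → x w0 ≠ 0 →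
      ∃ u : Fin n → ℤ, u ≠ 0 ∧ Finsupp.single u (1:ℚ) ∈ I := by
  classical
  intro N
  induction N with
  | zero =>
    intro x _ hc w0 _ hw0x
    exfalso
    have h1 := Finset.card_pos.mpr ⟨w0, Finsupp.mem_support_iff.mpr hw0x⟩
    omega
  | succ N IH =>
    intro x hx hc w0 hw0 hxw0
    have hw0s : w0 ∈ x.support := Finsupp.mem_support_iff.mpr hxw0
    by_cases h1 : x.support.card = 1
    · -- x is a single
      refine ⟨w0, hw0, ?_⟩
      obtain ⟨a, ha⟩ := Finset.card_eq_one.mp h1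
      have haw : a = w0 := by
        have := hw0s; rw [ha, Finset.mem_singleton] at this; exact this.symm
      rw [haw] at ha
      obtain ⟨_, hxa⟩ := Finsupp.support_eq_singleton.mp ha
      have hx1 : Finsupp.single w0 (1:ℚ) = (x w0)⁻¹ • Finsupp.single w0 (x w0) := by
        rw [Finsupp.smul_single, smul_eq_mul, inv_mul_cancel₀ hxw0]
      rw [hx1, ← hxa]
      exact I.smul_mem _ hx
    have h2 : 2 ≤ x.support.card := by
      have := Finset.card_pos.mpr ⟨w0, hw0s⟩; omega
    -- generic kill step
    have kill : ∀ (y : (Fin n → ℤ) →₀ ℚ), y ∈ I → y.support.card ≤ N + 1 →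
        ∀ w0' v w1 : Fin n → ℤ, y w0' ≠ 0 → w0' ≠ 0 → B w0' v ≠ 0 →
        w1 ∈ y.support → B w1 v = 0 →
        ∃ u : Fin n → ℤ, u ≠ 0 ∧ Finsupp.single u (1:ℚ) ∈ I := by
      intro y hy hyc w0' v w1 hyw0 hw0'ne hv hw1 hkill
      set y' := brQ (fun a b => B a b) y (Finsupp.single v 1) with hy'def
      have hy' : y' ∈ I := hI _ hy _
      have hcard : y'.support.card ≤ N := by
        have h3 : y'.support.card ≤ y.support.card - 1 := shrink_card B hw1 hkill
        have hpos := Finset.card_pos.mpr ⟨w1, hw1⟩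
        omega
      have hco : y' (w0' + v) ≠ 0 := by
        rw [hy'def, brQ_apply, add_sub_cancel_right]
        exact mul_ne_zero hyw0 (Int.cast_ne_zero.mpr hv)
      have hne : w0' + v ≠ 0 := by
        intro h
        apply hv
        have hveq : v = -w0' := by
          have := congrFun h
          funext i
          have h2 := this i
          simp only [Pi.add_apply, Pi.zero_apply, Pi.neg_apply] at *
          linarith
        rw [hveq, map_neg, Bww B hB, neg_zero]
      exact IH y' hy' hcard _ hne hco
    by_cases hz : (0 : Fin n → ℤ) ∈ x.support
    · obtain ⟨v, hv⟩ := hnd w0 hw0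
      exact kill x hx hc w0 v 0 hxw0 hw0 hv hz (by simp)
    by_cases hsep : ∃ w1 ∈ x.support, ∃ v, B w1 v = 0 ∧ B w0 v ≠ 0
    · obtain ⟨w1, hw1, v, hk, hv⟩ := hsep
      exact kill x hx hc w0 v w1 hxw0 hw0 hv hw1 hk
    -- line case
    push_neg at hsep
    have hP : ∀ w ∈ x.support, ∃ p q : ℤ, p ≠ 0 ∧ q ≠ 0 ∧ p • w = q • w0 := by
      intro w hw
      rcases dichotomy B hnd hw0 w with ⟨v, hv1, hv2⟩ | h
      · exact absurd (hsep w hw v hv1) hv2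
      · exact h
    obtain ⟨v, hv⟩ := hnd w0 hw0
    set x' := brQ (fun a b => B a b) x (Finsupp.single v 1) with hx'def
    have hx' : x' ∈ I := hI _ hx _
    have hxc' : x'.support.card ≤ N + 1 := le_trans (brQ_supp_card B x v) hc
    have hco : x' (w0 + v) ≠ 0 := by
      rw [hx'def, brQ_apply, add_sub_cancel_right]
      exact mul_ne_zero hxw0 (Int.cast_ne_zero.mpr hv)
    have hne : w0 + v ≠ 0 := by
      intro h
      apply hv
      have hveq : v = -w0 := by
        funext i
        have h2 := congrFun h i
        simp only [Pi.add_apply, Pi.zero_apply, Pi.neg_apply] at *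
        linarith
      rw [hveq, map_neg, Bww B hB, neg_zero]
    by_cases hone : x'.support.card ≤ N
    · exact IH x' hx' hone _ hne hco
    -- x'.support has ≥ 2 elements
    have hco' : (w0 + v) ∈ x'.support := Finsupp.mem_support_iff.mpr hco
    obtain ⟨u', hu's, hu'ne⟩ :=
      Finset.exists_mem_ne (by omega : 1 < x'.support.card) (w0 + v)
    obtain ⟨hu'mem, hu'B⟩ := mem_supp_brQ B (hx'def ▸ hu's)
    -- v is not proportional to w0
    have hvnp : ∀ a b : ℤ, b ≠ 0 → b • v ≠ a • w0 := by
      intro a b hb h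
      have h1 : (B w0) (b • v) = (B w0) (a • w0) := by rw [h]
      rw [map_smul, map_smul, smul_eq_mul, smul_eq_mul, Bww B hB, mul_zero] at h1
      rcases mul_eq_zero.mp h1 with h2 | h2
      · exact hb h2
      · exact hv h2
    have hnp : ¬ ∃ p q : ℤ, p ≠ 0 ∧ q ≠ 0 ∧ p • u' = q • (w0 + v) := by
      rintro ⟨p, q, hp, hq, hpq⟩
      obtain ⟨p1, q1, hp1, hq1, h11⟩ := hP (u' - v) hu'mem
      by_cases hpq' : p = q
      · subst hpq'
        apply hu'ne
        funext i
        have h2 := congrFun hpq i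
        simp only [Pi.smul_apply, Pi.add_apply, smul_eq_mul] at h2
        have := mul_left_cancel₀ hp h2
        simpa using this
      · refine hvnp (p1 * q - p * q1) (p1 * (p - q))
          (mul_ne_zero hp1 (sub_ne_zero.mpr hpq')) ?_
        funext i
        have hi1 := congrFun hpq i
        have hi2 := congrFun h11 i
        simp only [Pi.smul_apply, Pi.add_apply, Pi.sub_apply, smul_eq_mul] at *
        linear_combination p1 * hi1 - p * hi2
    rcases dichotomy B hnd hne u' with ⟨v', hv'1, hv'2⟩ | h
    · exact kill x' hx' hxc' (w0 + v) v' u' hco hne hv'2 hu's hv'1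
    · exact absurd h hnp

lemma decomp (x : (Fin n → ℤ) →₀ ℚ) :
    x = Finsupp.single 0 (x 0) + ∑ w ∈ x.support.erase 0, Finsupp.single w (x w) := by
  classical
  by_cases h : (0 : Fin n → ℤ) ∈ x.support
  · conv_lhs => rw [← Finsupp.sum_single x]
    unfold Finsupp.sum
    rw [← Finset.add_sum_erase _ _ h]
  · have hx0 : x 0 = 0 := Finsupp.notMem_support_iff.mp h
    rw [hx0, Finsupp.single_zero, zero_add, Finset.erase_eq_of_notMem h]
    conv_lhs => rw [← Finsupp.sum_single x]
    rfl

end Aux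

theorem stmt7 (g : ℕ) (hg : 1 ≤ g)
    (B : (Fin (2 * g) → ℤ) →ₗ[ℤ] (Fin (2 * g) → ℤ) →ₗ[ℤ] ℤ)
    (hB : ∀ x y, B x y = - B y x)
    (hnd : ∀ x : Fin (2 * g) → ℤ, x ≠ 0 → ∃ y, B x y ≠ 0)
    (I : Submodule ℚ ((Fin (2 * g) → ℤ) →₀ ℚ))
    (hI : ∀ x ∈ I, ∀ y, brQ (fun a b => B a b) x y ∈ I) :
    I = ⊥ ∨
    I = Submodule.span ℚ {Finsupp.single (0 : Fin (2 * g) → ℤ) (1 : ℚ)} ∨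
    I = Submodule.span ℚ
      {v | ∃ w : Fin (2 * g) → ℤ, w ≠ 0 ∧ v = Finsupp.single w (1 : ℚ)} ∨
    I = ⊤ := by
  classical
  by_cases hbot : I = ⊥
  · exact Or.inl hbot
  right
  obtain ⟨x0, hx0I, hx0⟩ := Submodule.ne_bot_iff I |>.mp hbot
  by_cases hall : ∀ x ∈ I, ∀ w : Fin (2 * g) → ℤ, w ≠ 0 → x w = 0
  · left
    have hgen : Finsupp.single (0 : Fin (2 * g) → ℤ) (1 : ℚ) ∈ I := by
      have hx0s : x0 = Finsupp.single 0 (x0 0) := by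
        ext w
        by_cases hw : w = 0
        · subst hw; simp
        · rw [hall x0 hx0I w hw, Finsupp.single_apply, if_neg (fun h => hw h.symm)]
      have hx00 : x0 0 ≠ 0 := by
        intro h
        apply hx0
        rw [hx0s, h, Finsupp.single_zero]
      have h1 : Finsupp.single (0 : Fin (2 * g) → ℤ) (1 : ℚ)
          = (x0 0)⁻¹ • Finsupp.single 0 (x0 0) := by
        rw [Finsupp.smul_single, smul_eq_mul, inv_mul_cancel₀ hx00]
      rw [h1, ← hx0s]
      exact I.smul_mem _ hx0I
    apply le_antisymm
    · intro x hx
      have hxs : x = Finsupp.single 0 (x 0) := by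
        ext w
        by_cases hw : w = 0
        · subst hw; simp
        · rw [hall x hx w hw, Finsupp.single_apply, if_neg (fun h => hw h.symm)]
      rw [hxs]
      have h2 : Finsupp.single (0 : Fin (2 * g) → ℤ) (x 0)
          = (x 0) • Finsupp.single 0 (1 : ℚ) := by
        rw [Finsupp.smul_single, smul_eq_mul, mul_one]
      rw [h2]
      exact Submodule.smul_mem _ _ (Submodule.subset_span rfl)
    · rw [Submodule.span_le]
      intro y hy
      rw [Set.mem_singleton_iff] at hy
      rw [hy]
      exact hgen
  push_neg at hall
  obtain ⟨x, hxI, w0, hw0, hxw0⟩ := hall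
  obtain ⟨u, hu, huI⟩ :=
    main_lemma B hI hB hnd x.support.card x hxI le_rfl w0 hw0 hxw0
  have hallsingle : ∀ v : Fin (2 * g) → ℤ, v ≠ 0 → Finsupp.single v (1:ℚ) ∈ I :=
    fun v hv => propagate B hI hB hnd hu huI hv
  by_cases h0 : Finsupp.single (0 : Fin (2 * g) → ℤ) (1 : ℚ) ∈ I
  · right; right
    rw [eq_top_iff]
    intro x _
    rw [← Finsupp.sum_single x]
    apply Submodule.finsuppSum_mem
    intro w hw
    have hs : Finsupp.single w (x w) = (x w) • Finsupp.single w (1:ℚ) := by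
      rw [Finsupp.smul_single, smul_eq_mul, mul_one]
    rw [hs]
    by_cases hwz : w = 0
    · subst hwz; exact I.smul_mem _ h0
    · exact I.smul_mem _ (hallsingle w hwz)
  · right; left
    apply le_antisymm
    · intro x hx
      have hx0 : x 0 = 0 := by
        by_contra hx0
        apply h0
        have hs : (∑ w ∈ x.support.erase 0, Finsupp.single w (x w)) ∈ I := by
          apply Submodule.sum_mem
          intro w hw
          have hwne : w ≠ 0 := Finset.ne_of_mem_erase hw
          have h2 : Finsupp.single w (x w) = (x w) • Finsupp.single w (1:ℚ) := by
            rw [Finsupp.smul_single, smul_eq_mul, mul_one]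
          rw [h2]
          exact I.smul_mem _ (hallsingle w hwne)
        have hdec : Finsupp.single (0 : Fin (2*g) → ℤ) (x 0)
            = x - ∑ w ∈ x.support.erase 0, Finsupp.single w (x w) := by
          exact eq_sub_of_add_eq (decomp x).symm
        have hmem : Finsupp.single (0 : Fin (2*g) → ℤ) (x 0) ∈ I := by
          rw [hdec]; exact I.sub_mem hx hs
        have h1 : Finsupp.single (0 : Fin (2 * g) → ℤ) (1 : ℚ)
            = (x 0)⁻¹ • Finsupp.single 0 (x 0) := by
          rw [Finsupp.smul_single, smul_eq_mul, inv_mul_cancel₀ hx0]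
        rw [h1]
        exact I.smul_mem _ hmem
      rw [← Finsupp.sum_single x]
      apply Submodule.finsuppSum_mem
      intro w hw
      have hwne : w ≠ 0 := by
        intro h; subst h; exact hw hx0
      have h2 : Finsupp.single w (x w) = (x w) • Finsupp.single w (1:ℚ) := by
        rw [Finsupp.smul_single, smul_eq_mul, mul_one]
      rw [h2]
      exact Submodule.smul_mem _ _ (Submodule.subset_span ⟨w, hwne, rfl⟩)
    · rw [Submodule.span_le]
      rintro y ⟨w, hw, rfl⟩
      exact hallsingle w hw
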